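/- arXiv:2403.11360 — 3 statements merged into one kernel-verified Lean document; each statement's English description precedes it below -/
import Mathlib

section
/- Let $b,c>0$ with $b+c=w$ and suppose $\cos\varphi = \tanh b/\tanh c$ for some $\varphi\in(0,\pi/2)$. Then $\tanh b = \frac{1+\cos\varphi-\sqrt{(1+\cos\varphi)^2-4\tanh^2 w\cos\varphi}}{2\tanh w}$. -/
open Real

lemma tanh_pos' {x : ℝ} (hx : 0 < x) : 0 < Real.tanh x := by
  rw [Real.tanh_eq_sinh_div_cosh]
  exact div_pos (Real.sinh_pos_iff.2 hx) (Real.cosh_pos x)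

lemma tanh_lt_one' (x : ℝ) : Real.tanh x < 1 := by
  rw [Real.tanh_eq_sinh_div_cosh, div_lt_one (Real.cosh_pos x)]
  nlinarith [Real.cosh_sub_sinh x, Real.exp_pos (-x)]

lemma tanh_add' (x y : ℝ) :
    Real.tanh (x + y) * (1 + Real.tanh x * Real.tanh y) = Real.tanh x + Real.tanh y := by
  rw [Real.tanh_eq_sinh_div_cosh, Real.tanh_eq_sinh_div_cosh, Real.tanh_eq_sinh_div_cosh,
    Real.sinh_add, Real.cosh_add]
  have h1 := Real.cosh_pos (x := x)
  have h2 := Real.cosh_pos (x := y)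
  have h3 : (0:ℝ) < Real.cosh x * Real.cosh y + Real.sinh x * Real.sinh y := by
    nlinarith [Real.cosh_sub_sinh x, Real.cosh_sub_sinh y, Real.cosh_add_sinh x,
      Real.cosh_add_sinh y, Real.exp_pos x, Real.exp_pos y, Real.exp_pos (-x), Real.exp_pos (-y)]
  have h4 : Real.sinh x * Real.sinh y + Real.cosh y * Real.cosh x ≠ 0 := ne_of_gt (by nlinarith)
  field_simp
  linear_combination (Real.sinh x * Real.cosh y + Real.cosh x * Real.sinh y) * mul_inv_cancel₀ h4

theorem tanh_leg_formula (b c w : ℝ) (hb : 0 < b) (hc : 0 < c) (hw : b + c = w)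
    (φ : ℝ) (hφ : φ ∈ Set.Ioo 0 (Real.pi / 2))
    (hcos : Real.cos φ = Real.tanh b / Real.tanh c) :
    Real.tanh b =
      (1 + Real.cos φ - Real.sqrt ((1 + Real.cos φ) ^ 2 - 4 * Real.tanh w ^ 2 * Real.cos φ)) /
        (2 * Real.tanh w) := by
  set t := Real.tanh b with ht'
  set u := Real.tanh c with hu'
  set T := Real.tanh w with hT'
  set k := Real.cos φ with hk'
  clear_value t u T k
  have ht : 0 < t := ht' ▸ tanh_pos' hb
  have hu : 0 < u := hu' ▸ tanh_pos' hc
  have ht1 : t < 1 := ht' ▸ tanh_lt_one' b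
  have hu1 : u < 1 := hu' ▸ tanh_lt_one' c
  have hT0 : 0 < T := by rw [hT', ← hw]; exact tanh_pos' (by linarith)
  have h1 : T * (1 + t * u) = t + u := by rw [hT', ht', hu', ← hw]; exact tanh_add' b c
  have h2 : k * u = t := by rw [hcos]; field_simp
  -- key quadratic identity
  have hquad : T * t ^ 2 + T * k - t - t * k = 0 := by
    linear_combination k * h1 + (1 - T * t) * h2
  have hnn : 0 ≤ 1 + k - 2 * T * t := by
    have key : (1 + t * u) * (1 + k - 2 * T * t) * u = (t + u) * (1 - t * u) := by
      linear_combination (-2*t*u) * h1 + (1 + t*u) * h2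
    have htu : t * u < 1 := by nlinarith [mul_lt_mul_of_pos_right ht1 hu]
    have hpos : 0 < (t + u) * (1 - t * u) := mul_pos (by linarith) (by linarith)
    have hA : (0:ℝ) < (1 + t * u) * u := by positivity
    have hX : 1 + k - 2 * T * t = (t + u) * (1 - t * u) / ((1 + t * u) * u) := by
      field_simp
      linear_combination key
    rw [hX]
    exact le_of_lt (div_pos hpos hA)
  have hsq : (1 + k) ^ 2 - 4 * T ^ 2 * k = (1 + k - 2 * T * t) ^ 2 := by
    linear_combination (-4 * T) * hquad
  rw [hsq, Real.sqrt_sq hnn]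
  field_simp
  ring
end

section
/- Let $t\in(0,1)$ and define $h(x)=\dfrac{\arccos\frac{x\sqrt{1-t^2}}{t-x}}{\arccos\frac{x(1-xt)}{t-x}}$ for $0<x<\frac{1-\sqrt{1-t^2}}{t}$. Then $h$ is strictly increasing on this interval. -/
open Real

private lemma sq_eq_of_nonneg {a b : ℝ} (ha : 0 ≤ a) (hb : 0 ≤ b) (h : a ^ 2 = b ^ 2) :
    a = b := by
  rcases mul_eq_zero.1 (show (a - b) * (a + b) = 0 by nlinarith) with h' | h'
  · linarith
  · linarith

set_option maxHeartbeats 1000000 in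
/-- The function Ψ (the derivative of β in terms of c = cos α) is strictly decreasing. -/
private lemma psi_anti {k : ℝ} (hk : 1 < k) :
    StrictAntiOn (fun c : ℝ => (k + 2*c + k*c^2) / ((1 + k*c) * Real.sqrt (c^2 + 2*k*c + 1)))
      (Set.Icc 0 1) := by
  have hk0 : (0:ℝ) < k := by linarith
  apply strictAntiOn_of_deriv_neg (convex_Icc 0 1)
  · apply ContinuousOn.div
    · fun_prop
    · fun_prop
    · intro c hc
      have h1 : 0 < 1 + k*c := by nlinarith [hc.1]
      have hQ : 0 < c^2 + 2*k*c + 1 := by nlinarith [hc.1]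
      exact (mul_pos h1 (Real.sqrt_pos.2 hQ)).ne'
  · rw [interior_Icc]
    rintro c ⟨hc0, hc1⟩
    have hQ : 0 < c^2 + 2*k*c + 1 := by nlinarith
    have hq0 : 0 < Real.sqrt (c^2 + 2*k*c + 1) := Real.sqrt_pos.2 hQ
    have hq2 : Real.sqrt (c^2 + 2*k*c + 1) ^ 2 = c^2 + 2*k*c + 1 := Real.sq_sqrt hQ.le
    set q := Real.sqrt (c^2 + 2*k*c + 1) with hqdef
    have hden : 0 < 1 + k*c := by nlinarith
    -- derivative of numerator
    have hN : HasDerivAt (fun c : ℝ => k + 2*c + k*c^2) (2 + 2*k*c) c := by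
      have h1 : HasDerivAt (fun c : ℝ => k + 2*c + k*c^2) (0 + 2*1 + k*(2*c^1)) c :=
        (((hasDerivAt_const c k).add ((hasDerivAt_id c).const_mul 2)).add
          ((hasDerivAt_pow 2 c).const_mul k))
      convert h1 using 1; ring
    -- derivative of sqrt part
    have hqd : HasDerivAt (fun c : ℝ => Real.sqrt (c^2 + 2*k*c + 1))
        ((2*c + 2*k) / (2*q)) c := by
      have hin : HasDerivAt (fun c : ℝ => c^2 + 2*k*c + 1) (2*c + 2*k) c := by
        have h1 : HasDerivAt (fun c : ℝ => c^2 + 2*k*c + 1) (2*c^1 + 2*k*1 + 0) c :=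
          ((hasDerivAt_pow 2 c).add ((hasDerivAt_id c).const_mul (2*k))).add
            (hasDerivAt_const c 1)
        convert h1 using 1; ring
      have h2 := (Real.hasDerivAt_sqrt hQ.ne').comp c hin
      refine h2.congr_deriv ?_
      ring
    -- derivative of denominator
    have hD : HasDerivAt (fun c : ℝ => (1 + k*c) * Real.sqrt (c^2 + 2*k*c + 1))
        (k * q + (1 + k*c) * ((2*c + 2*k) / (2*q))) c := by
      have h1 : HasDerivAt (fun c : ℝ => 1 + k*c) (k * 1) c :=
        ((hasDerivAt_id c).const_mul k).const_add 1
      have h3 := h1.mul hqd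
      refine h3.congr_deriv ?_
      rw [hqdef]
      ring
    have hDne : ((1 + k*c) * q) ≠ 0 := (mul_pos hden hq0).ne'
    have hdiv : HasDerivAt (fun c : ℝ => (k + 2*c + k*c^2) / ((1 + k*c) * Real.sqrt (c^2 + 2*k*c + 1))) _ c := hN.div hD hDne
    rw [hdiv.deriv]
    apply div_neg_of_neg_of_pos
    · have e1 : (2 + 2*k*c) * ((1 + k*c) * q) -
          (k + 2*c + k*c^2) * (k * q + (1 + k*c) * ((2*c + 2*k) / (2*q)))
          = ((2 + 2*k*c) * ((1 + k*c) * q^2)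
              - (k + 2*c + k*c^2) * (k * q^2 + (1 + k*c) * (c + k))) / q := by
        field_simp
      have e2 : (2 + 2*k*c) * ((1 + k*c) * (c^2 + 2*k*c + 1))
          - (k + 2*c + k*c^2) * (k * (c^2 + 2*k*c + 1) + (1 + k*c) * (c + k))
          = (1 - k^2) * (2 + 3*c*k - c^3*k) := by ring
      rw [e1, hq2, e2]
      apply div_neg_of_neg_of_pos _ hq0
      have h1 : (1:ℝ) - k^2 < 0 := by nlinarith
      have h2 : 0 < 2 + 3*c*k - c^3*k := by
        nlinarith [mul_pos (mul_pos hc0 hk0) (show (0:ℝ) < 3 - c^2 by nlinarith)]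
      exact mul_neg_of_neg_of_pos h1 h2
    · positivity

set_option maxHeartbeats 1000000 in
/-- The key inequality: β(α) < α·Ψ(cos α). -/
private lemma key_ineq {k : ℝ} (hk : 1 < k) {α : ℝ} (hα0 : 0 < α) (hα2 : α < π/2) :
    Real.arccos (Real.cos α * (k + Real.cos α) / (1 + k * Real.cos α)) <
      α * ((k + 2*Real.cos α + k*Real.cos α^2) /
        ((1 + k*Real.cos α) * Real.sqrt (Real.cos α^2 + 2*k*Real.cos α + 1))) := by
  have hk0 : (0:ℝ) < k := by linarith
  have hπ : (0:ℝ) < π := pi_pos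
  set b : ℝ → ℝ := fun y => Real.arccos (Real.cos y * (k + Real.cos y) / (1 + k * Real.cos y))
    with hbdef
  set Ψ : ℝ → ℝ := fun c : ℝ => (k + 2*c + k*c^2) / ((1 + k*c) * Real.sqrt (c^2 + 2*k*c + 1))
    with hΨdef
  have hcospos : ∀ y ∈ Set.Icc 0 α, 0 < Real.cos y := by
    intro y hy
    exact Real.cos_pos_of_mem_Ioo ⟨by linarith [hy.1], by linarith [hy.2]⟩
  have hcont : ContinuousOn b (Set.Icc 0 α) := by
    apply Real.continuous_arccos.comp_continuousOn
    apply ContinuousOn.div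
    · fun_prop
    · fun_prop
    · intro y hy
      have := hcospos y hy
      nlinarith
  have hders : ∀ y ∈ Set.Ioo 0 α, HasDerivAt b (Ψ (Real.cos y)) y := by
    rintro y ⟨hy0, hyα⟩
    have hcy0 : 0 < Real.cos y := hcospos y ⟨hy0.le, hyα.le⟩
    have hcy1 : Real.cos y < 1 := by
      have h1 := Real.strictAntiOn_cos (Set.mem_Icc.2 ⟨le_rfl, hπ.le⟩)
        (Set.mem_Icc.2 ⟨hy0.le, by linarith⟩) hy0
      simpa using h1
    have hsy : 0 < Real.sin y := Real.sin_pos_of_pos_of_lt_pi hy0 (by linarith)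
    set c := Real.cos y with hcdef
    have hsy2 : Real.sin y ^ 2 = 1 - c^2 := Real.sin_sq y
    have hden : 0 < 1 + k*c := by positivity
    have hφ1 : c*(k+c)/(1+k*c) < 1 := by
      rw [div_lt_one hden]; nlinarith
    have hφ0 : 0 < c*(k+c)/(1+k*c) := by positivity
    have hinner : HasDerivAt (fun y => Real.cos y * (k + Real.cos y) / (1 + k * Real.cos y))
        (-(Real.sin y) * (k + 2*c + k*c^2) / (1+k*c)^2) y := by
      have h1 : HasDerivAt (fun y => Real.cos y * (k + Real.cos y))
          (-Real.sin y * (k + c) + c * -Real.sin y) y :=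
        (Real.hasDerivAt_cos y).mul ((Real.hasDerivAt_cos y).const_add k)
      have h2 : HasDerivAt (fun y => 1 + k * Real.cos y) (k * -Real.sin y) y :=
        ((Real.hasDerivAt_cos y).const_mul k).const_add 1
      have h3 := h1.div h2 hden.ne'
      refine h3.congr_deriv ?_
      rw [← hcdef]
      field_simp
      ring
    have harc : HasDerivAt Real.arccos (-(1 / Real.sqrt (1 - (c*(k+c)/(1+k*c))^2)))
        (c*(k+c)/(1+k*c)) :=
      Real.hasDerivAt_arccos (by linarith) hφ1.ne
    have hb' := harc.comp y hinner
    have hQ : 0 < c^2 + 2*k*c + 1 := by positivity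
    have hq0 : 0 < Real.sqrt (c^2 + 2*k*c + 1) := Real.sqrt_pos.2 hQ
    have hq2 : Real.sqrt (c^2 + 2*k*c + 1) ^ 2 = c^2 + 2*k*c + 1 := Real.sq_sqrt hQ.le
    have hsqrt : Real.sqrt (1 - (c*(k+c)/(1+k*c))^2)
        = Real.sin y * Real.sqrt (c^2 + 2*k*c + 1) / (1+k*c) := by
      apply sq_eq_of_nonneg (Real.sqrt_nonneg _) (by positivity)
      have hR : (Real.sin y * Real.sqrt (c^2 + 2*k*c + 1) / (1+k*c))^2
          = (1-c^2)*(c^2 + 2*k*c + 1)/(1+k*c)^2 := by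
        rw [div_pow, mul_pow, hq2, hsy2]
      rw [Real.sq_sqrt (by nlinarith), hR]
      field_simp
      ring
    have hval : -(1 / Real.sqrt (1 - (c*(k+c)/(1+k*c))^2))
        * (-(Real.sin y) * (k + 2*c + k*c^2) / (1+k*c)^2) = Ψ c := by
      rw [hsqrt, hΨdef]
      field_simp
    have : HasDerivAt b (Ψ c) y := by
      rw [← hval]
      exact hb'
    exact this
  obtain ⟨ξ, hξ, hslope⟩ := exists_hasDerivAt_eq_slope b (fun y => Ψ (Real.cos y)) hα0 hcont hders
  have hb0 : b 0 = 0 := by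
    have h1 : (1:ℝ) * (k + 1) / (1 + k * 1) = 1 := by field_simp; ring
    simp only [hbdef, Real.cos_zero, h1, Real.arccos_one]
  have hbα : b α = α * Ψ (Real.cos ξ) := by
    rw [hb0] at hslope
    field_simp at hslope
    rw [hslope, sub_zero, sub_zero]; field_simp
  have hcξα : Real.cos α < Real.cos ξ := by
    apply Real.strictAntiOn_cos (Set.mem_Icc.2 ⟨hξ.1.le, by linarith [hξ.2]⟩)
      (Set.mem_Icc.2 ⟨hα0.le, by linarith⟩) hξ.2
  have hcα0 : 0 ≤ Real.cos α := (hcospos α ⟨hα0.le, le_rfl⟩).le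
  have hcξ1 : Real.cos ξ ≤ 1 := Real.cos_le_one ξ
  have hΨlt : Ψ (Real.cos ξ) < Ψ (Real.cos α) := by
    have := psi_anti hk (Set.mem_Icc.2 ⟨hcα0, Real.cos_le_one α⟩)
      (Set.mem_Icc.2 ⟨by linarith, hcξ1⟩) hcξα
    exact this
  calc b α = α * Ψ (Real.cos ξ) := hbα
    _ < α * Ψ (Real.cos α) := by exact mul_lt_mul_of_pos_left hΨlt hα0

private lemma hgf_lemma {kk AA uu qq vv tx Num st : ℝ} (hu : uu ≠ 0) (hq : qq ≠ 0)
    (htx : tx ≠ 0) (hkA : 1 + kk*AA ≠ 0) (hv : vv = uu*qq/(1+kk*AA))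
    (hkey : (1+kk*AA)^2 * Num = (kk+2*AA+kk*AA^2) * st) :
    -(1/vv) * (Num/tx^2) = ((kk+2*AA+kk*AA^2)/((1+kk*AA)*qq)) * (-(1/uu)*(st/tx^2)) := by
  subst hv
  field_simp
  linear_combination (-1) * hkey

set_option maxHeartbeats 2000000 in
theorem h_strictMono (t : ℝ) (ht : t ∈ Set.Ioo (0:ℝ) 1)
    (h : ℝ → ℝ)
    (hh : ∀ x, h x =
      Real.arccos (x * Real.sqrt (1 - t ^ 2) / (t - x)) /
        Real.arccos (x * (1 - x * t) / (t - x))) :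
    StrictMonoOn h (Set.Ioo 0 ((1 - Real.sqrt (1 - t ^ 2)) / t)) := by
  obtain ⟨ht0, ht1⟩ := ht
  have hfun : h = fun x => Real.arccos (x * Real.sqrt (1 - t ^ 2) / (t - x)) /
      Real.arccos (x * (1 - x * t) / (t - x)) := funext hh
  subst hfun
  set s := Real.sqrt (1 - t ^ 2) with hsdef
  have ht2 : 0 < 1 - t^2 := by nlinarith
  have hs0 : 0 < s := Real.sqrt_pos.2 ht2
  have hs2 : s^2 = 1 - t^2 := Real.sq_sqrt ht2.le
  have hs1 : s < 1 := by nlinarith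
  set k := s⁻¹ with hkdef
  have hsk : s * k = 1 := mul_inv_cancel₀ hs0.ne'
  have hk0 : 0 < k := inv_pos.2 hs0
  have hk1 : 1 < k := by nlinarith
  have hmain : ∀ x ∈ Set.Ioo (0:ℝ) ((1 - s)/t), ∃ d, 0 < d ∧
      HasDerivAt (fun x => Real.arccos (x * s / (t - x)) /
        Real.arccos (x * (1 - x * t) / (t - x))) d x := by
    rintro x ⟨hx0, hxm⟩
    have hxt1s : x * t < 1 - s := (lt_div_iff₀ ht0).1 hxm
    have hxs : x * (1 + s) < t := by nlinarith
    have htx0 : 0 < t - x := by nlinarith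
    set A := x * s / (t - x) with hAdef
    set B := x * (1 - x * t) / (t - x) with hBdef
    have hA0 : 0 < A := div_pos (by positivity) htx0
    have hA1 : A < 1 := by
      rw [hAdef, div_lt_one htx0]; nlinarith
    have hxt1 : 0 < 1 - x * t := by nlinarith
    have hB0 : 0 < B := div_pos (by positivity) htx0
    have hkA : 0 < 1 + k * A := by positivity
    have hsA : 0 < s + A := by linarith
    -- helper identities
    have e5 : 1 + k * A = t / (t - x) := by
      rw [hAdef, hkdef]
      field_simp
      ring
    have e1 : 1 + s * A = t * (1 - x * t) / (t - x) := by
      rw [hAdef, eq_div_iff htx0.ne']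
      field_simp
      linear_combination x * hs2
    have e2 : s + A = s * t / (t - x) := by
      rw [hAdef, eq_div_iff htx0.ne']
      field_simp
      ring
    have e3 : A * (k + A) / (1 + k * A) = A * (1 + s * A) / (s + A) := by
      rw [div_eq_div_iff hkA.ne' hsA.ne', hkdef]
      field_simp
      all_goals try ring
      all_goals try simp
      all_goals try tauto
    -- B = φ(A)
    have hBA : B = A * (k + A) / (1 + k * A) := by
      rw [e3, e1, e2, hAdef, hBdef]
      field_simp
    have hB1 : B < 1 := by
      rw [hBA, div_lt_one hkA]; nlinarith
    -- derivatives of A and B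
    have hA' : HasDerivAt (fun x => x * s / (t - x)) (s * t / (t - x)^2) x := by
      have h1 : HasDerivAt (fun x : ℝ => x * s) (1 * s) x := (hasDerivAt_id x).mul_const s
      have h2 : HasDerivAt (fun x : ℝ => t - x) (-1) x := (hasDerivAt_id x).const_sub t
      have h3 := h1.div h2 htx0.ne'
      refine h3.congr_deriv ?_
      field_simp
      all_goals try ring
      all_goals try simp
      all_goals try tauto
    have hB' : HasDerivAt (fun x => x * (1 - x * t) / (t - x))
        (((1 - 2*x*t) * (t - x) + x * (1 - x*t)) / (t - x)^2) x := by
      have h1 : HasDerivAt (fun x : ℝ => x * (1 - x * t))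
          (1 * (1 - x * t) + x * (-(1 * t))) x :=
        (hasDerivAt_id x).mul (((hasDerivAt_id x).mul_const t).const_sub 1)
      have h2 : HasDerivAt (fun x : ℝ => t - x) (-1) x := (hasDerivAt_id x).const_sub t
      have h3 := h1.div h2 htx0.ne'
      refine h3.congr_deriv ?_
      field_simp
      all_goals try ring
      all_goals try simp
      all_goals try tauto
    -- arccos compositions
    have hf : HasDerivAt (fun x => Real.arccos (x * s / (t - x)))
        (-(1 / Real.sqrt (1 - A^2)) * (s * t / (t - x)^2)) x :=
      (Real.hasDerivAt_arccos (by linarith) hA1.ne).comp (h₂ := Real.arccos) x hA'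
    have hg : HasDerivAt (fun x => Real.arccos (x * (1 - x * t) / (t - x)))
        (-(1 / Real.sqrt (1 - B^2)) * (((1 - 2*x*t) * (t - x) + x * (1 - x*t)) / (t - x)^2)) x :=
      (Real.hasDerivAt_arccos (by linarith) hB1.ne).comp (h₂ := Real.arccos) x hB'
    have hgpos : 0 < Real.arccos B := Real.arccos_pos.2 hB1
    have hder := hf.div hg hgpos.ne'
    refine ⟨_, ?_, hder⟩
    -- positivity of the derivative
    apply div_pos _ (pow_pos hgpos 2)
    -- abbreviations for the square roots
    have hu0 : 0 < Real.sqrt (1 - A^2) := Real.sqrt_pos.2 (by nlinarith)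
    have hu2 : Real.sqrt (1 - A^2) ^ 2 = 1 - A^2 := Real.sq_sqrt (by nlinarith)
    have hv0 : 0 < Real.sqrt (1 - B^2) := Real.sqrt_pos.2 (by nlinarith)
    have hv2 : Real.sqrt (1 - B^2) ^ 2 = 1 - B^2 := Real.sq_sqrt (by nlinarith)
    have hQ : 0 < A^2 + 2*k*A + 1 := by positivity
    have hq0 : 0 < Real.sqrt (A^2 + 2*k*A + 1) := Real.sqrt_pos.2 hQ
    have hq2 : Real.sqrt (A^2 + 2*k*A + 1) ^ 2 = A^2 + 2*k*A + 1 := Real.sq_sqrt hQ.le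
    set u := Real.sqrt (1 - A^2) with hudef
    set v := Real.sqrt (1 - B^2) with hvdef
    set q := Real.sqrt (A^2 + 2*k*A + 1) with hqdef
    have hvuq : v = u * q / (1 + k * A) := by
      rw [eq_div_iff hkA.ne']
      apply sq_eq_of_nonneg (by positivity) (by positivity)
      rw [mul_pow, mul_pow, hv2, hu2, hq2, hBA]
      field_simp
      ring
    have hsne : s ≠ 0 := hs0.ne'
    have hkne : k ≠ 0 := hk0.ne'
    have htxne : t - x ≠ 0 := htx0.ne'
    have hkAne : (1 + k * A) ≠ 0 := hkA.ne'
    have hune : u ≠ 0 := hu0.ne'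
    have hqne : q ≠ 0 := hq0.ne'
    have hvne : v ≠ 0 := hv0.ne'
    -- key polynomial identity
    have hkey : (1 + k*A)^2 * ((1 - 2*x*t) * (t - x) + x * (1 - x*t))
        = (k + 2*A + k*A^2) * (s * t) := by
      have e7 : (k + 2*A + k*A^2) * (s * t) = (1 + 2*s*A + A^2) * t := by
        linear_combination (t * (1 + A^2)) * hsk
      rw [e7, e5, hAdef]
      field_simp
      linear_combination (x^2 - 2*t*x) * hs2
    -- relation between the two derivatives
    have hgf : -(1 / v) * (((1 - 2*x*t) * (t - x) + x * (1 - x*t)) / (t - x)^2)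
        = ((k + 2*A + k*A^2) / ((1 + k*A) * q)) * (-(1 / u) * (s * t / (t - x)^2)) := by
      have := hgf_lemma hune hqne htxne hkAne hvuq hkey
      convert this using 3 <;> ring
    rw [← hAdef, ← hBdef, hgf]
    have hf'neg : -(1 / u) * (s * t / (t - x)^2) < 0 := by
      have h9 : 0 < (1 / u) * (s * t / (t - x)^2) := by positivity
      linarith only [h9]
    have hαcos : Real.cos (Real.arccos A) = A := Real.cos_arccos (by linarith) hA1.le
    have h0α : 0 < Real.arccos A := Real.arccos_pos.2 hA1
    have hα2 : Real.arccos A < π/2 := Real.arccos_lt_pi_div_two.2 hA0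
    have hki := key_ineq hk1 h0α hα2
    rw [hαcos, ← hBA, ← hqdef] at hki
    have hneg : Real.arccos B - Real.arccos A * ((k + 2*A + k*A^2) / ((1 + k*A) * q)) < 0 := by
      linarith only [hki]
    have hpos := mul_pos_of_neg_of_neg hf'neg hneg
    linarith only [hpos]
  apply strictMonoOn_of_deriv_pos (convex_Ioo _ _)
  · intro x hx
    obtain ⟨d, _, hder⟩ := hmain x hx
    exact hder.continuousAt.continuousWithinAt
  · rw [interior_Ioo]
    intro x hx
    obtain ⟨d, hd0, hder⟩ := hmain x hx
    rw [hder.deriv]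
    exact hd0
end

section
/- Let $w>0$ and for odd $n\geq 3$ let $A_n(w) = 2\pi\,\frac{\arccos\frac{y_n\sqrt{1-t^2}}{t-y_n}}{\arccos\frac{y_n(1-t y_n)}{t-y_n}} - 2\pi$, where $t=\tanh w$ and $y_n = g_w(\pi/n) = \frac{1+\cos(\pi/n)-\sqrt{(1+\cos(\pi/n))^2-4t^2\cos(\pi/n)}}{2t}$. Then $\lim_{n\to\infty} A_n(w) = 2\pi\left(\cosh\frac{w}{2}-1\right)$. -/
open Real Filter

lemma arcsin_div_lim : Tendsto (fun x : ℝ => Real.arcsin x / x) (nhdsWithin 0 {(0:ℝ)}ᶜ) (nhds 1) := by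
  have h := (Real.hasDerivAt_arcsin (by norm_num) (by norm_num) : HasDerivAt Real.arcsin _ 0)
  have h2 := hasDerivAt_iff_tendsto_slope.mp h
  rw [slope_fun_def_field] at h2
  simp only [Real.arcsin_zero, sub_zero] at h2
  norm_num at h2
  exact h2

lemma sin_div_lim : Tendsto (fun x : ℝ => Real.sin x / x) (nhdsWithin 0 {(0:ℝ)}ᶜ) (nhds 1) := by
  have h2 := hasDerivAt_iff_tendsto_slope.mp (Real.hasDerivAt_sin 0)
  rw [slope_fun_def_field] at h2
  simp only [Real.sin_zero, sub_zero, Real.cos_zero] at h2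
  exact h2

lemma arccos_eq_two_arcsin {x : ℝ} (h1 : -1 ≤ x) (h2 : x ≤ 1) :
    Real.arccos x = 2 * Real.arcsin (Real.sqrt ((1 - x) / 2)) := by
  have hp0 : (0:ℝ) ≤ (1 - x)/2 := by linarith
  have hp1 : Real.sqrt ((1-x)/2) ≤ 1 := Real.sqrt_le_one.2 (by linarith)
  have hps : Real.sqrt ((1-x)/2) ^ 2 = (1-x)/2 := Real.sq_sqrt hp0
  have hnn : 0 ≤ Real.arcsin (Real.sqrt ((1-x)/2)) := Real.arcsin_nonneg.2 (Real.sqrt_nonneg _)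
  have hle : Real.arcsin (Real.sqrt ((1-x)/2)) ≤ π/2 := Real.arcsin_le_pi_div_two _
  have hcos : Real.cos (2 * Real.arcsin (Real.sqrt ((1-x)/2))) = x := by
    rw [Real.cos_two_mul', Real.cos_sq']
    rw [Real.sin_arcsin (by linarith [Real.sqrt_nonneg ((1-x)/2)]) hp1]
    rw [hps]; ring
  conv_lhs => rw [← hcos]
  rw [Real.arccos_cos (by linarith) (by linarith)]

set_option maxHeartbeats 2000000 in
theorem area_limit (w : ℝ) (hw : 0 < w) (t : ℝ) (ht : t = Real.tanh w)
    (y A : ℕ → ℝ)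
    (hy : ∀ n, y n = (1 + Real.cos (Real.pi / n) -
      Real.sqrt ((1 + Real.cos (Real.pi / n)) ^ 2 - 4 * t ^ 2 * Real.cos (Real.pi / n))) / (2 * t))
    (hA : ∀ n, A n = 2 * Real.pi *
      (Real.arccos (y n * Real.sqrt (1 - t ^ 2) / (t - y n)) /
        Real.arccos (y n * (1 - t * y n) / (t - y n))) - 2 * Real.pi) :
    Tendsto (fun k : ℕ => A (2 * k + 3)) atTop (nhds (2 * Real.pi * (Real.cosh (w / 2) - 1))) := by
  -- basic facts about t and s
  have hchw : (0:ℝ) < Real.cosh w := Real.cosh_pos w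
  have hshw : (0:ℝ) < Real.sinh w := by rw [← Real.sinh_zero]; exact Real.sinh_lt_sinh.2 hw
  have hcs : Real.cosh w ^ 2 = Real.sinh w ^ 2 + 1 := Real.cosh_sq w
  have ht0 : 0 < t := by
    rw [ht, Real.tanh_eq_sinh_div_cosh]; positivity
  have ht1 : t < 1 := by
    rw [ht, Real.tanh_eq_sinh_div_cosh, div_lt_one hchw]
    nlinarith
  set s : ℝ := Real.sqrt (1 - t ^ 2) with hs
  have hs2 : s ^ 2 = 1 - t ^ 2 := Real.sq_sqrt (by nlinarith)
  have hs0 : 0 < s := Real.sqrt_pos.2 (by nlinarith)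
  have hs1 : s < 1 := by nlinarith [Real.sqrt_nonneg (1 - t^2)]
  have hsc : s * Real.cosh w = 1 := by
    have h1 : (s * Real.cosh w) ^ 2 = 1 := by
      have : t ^ 2 = Real.sinh w ^ 2 / Real.cosh w ^ 2 := by
        rw [ht, Real.tanh_eq_sinh_div_cosh]; rw [div_pow]
      rw [mul_pow, hs2, this]
      field_simp
      linarith [hcs]
    nlinarith [sq_nonneg (s * Real.cosh w - 1), sq_nonneg (s * Real.cosh w + 1), mul_pos hs0 hchw]
  have hch2 : Real.cosh (w / 2) ^ 2 = (1 + s) / (2 * s) := by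
    have h1 : Real.cosh w = 2 * Real.cosh (w/2) ^ 2 - 1 := by
      have := Real.cosh_two_mul (w/2)
      have h2 : Real.cosh (w/2) ^ 2 = Real.sinh (w/2) ^ 2 + 1 := Real.cosh_sq (w/2)
      rw [show 2 * (w/2) = w by ring] at this
      rw [this]; rw [h2]; ring
    have hcw : Real.cosh w = 1 / s := by
      field_simp
      linarith [hsc]
    rw [hcw] at h1
    field_simp at h1 ⊢
    linarith

  -- sequences
  set θ : ℕ → ℝ := fun k => π / ((2 * k + 3 : ℕ) : ℝ) with hθdef
  set c : ℕ → ℝ := fun k => Real.cos (θ k) with hcdef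
  set D : ℕ → ℝ := fun k => Real.sqrt ((1 + c k) ^ 2 - 4 * t ^ 2 * c k) with hDdef
  set Y : ℕ → ℝ := fun k => y (2 * k + 3) with hYdef
  set u : ℕ → ℝ := fun k => 1 - c k with hudef
  set a : ℕ → ℝ := fun k => Y k * s / (t - Y k) with hadef
  set r : ℕ → ℝ := fun k => (1 - a k) / u k with hrdef
  set p : ℕ → ℝ := fun k => Real.sqrt ((1 - a k) / 2) with hpdef
  have hnk : ∀ k : ℕ, (3:ℝ) ≤ ((2 * k + 3 : ℕ) : ℝ) := by
    intro k; push_cast; norm_num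
  have hθpos : ∀ k, 0 < θ k := fun k => div_pos Real.pi_pos (by linarith [hnk k])
  have hθle : ∀ k, θ k ≤ π / 3 := by
    intro k
    apply div_le_div_of_nonneg_left Real.pi_pos.le (by norm_num) (hnk k)
  have hθltpi : ∀ k, θ k < π := fun k =>
    lt_of_le_of_lt (hθle k) (by linarith [Real.pi_pos])
  have hsinpos : ∀ k, 0 < Real.sin (θ k / 2) := by
    intro k
    apply Real.sin_pos_of_pos_of_lt_pi (by linarith [hθpos k])
    linarith [hθltpi k, Real.pi_pos]
  have hsin2 : ∀ k, Real.sin (θ k / 2) ^ 2 = u k / 2 := by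
    intro k
    have := Real.cos_two_mul (θ k / 2)
    rw [show 2 * (θ k / 2) = θ k by ring] at this
    have hc : c k = Real.cos (θ k) := rfl
    have hcos2 : Real.cos (θ k / 2) ^ 2 = 1 - Real.sin (θ k / 2) ^ 2 := Real.cos_sq' _
    simp only [hudef]
    rw [hc, this, hcos2]; ring
  have hclt1 : ∀ k, c k < 1 := by
    intro k
    have h1 := hsin2 k
    have h2 := hsinpos k
    simp only [hudef] at h1
    nlinarith
  have hcpos : ∀ k, 0 < c k := by
    intro k
    apply Real.cos_pos_of_mem_Ioo
    constructor
    · linarith [hθpos k, Real.pi_pos]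
    · linarith [hθle k, Real.pi_pos]
  have hupos : ∀ k, 0 < u k := fun k => by simp only [hudef]; linarith [hclt1 k]
  have hdisc : ∀ k, 0 < (1 + c k) ^ 2 - 4 * t ^ 2 * c k := by
    intro k
    nlinarith [hcpos k, hclt1 k, sq_nonneg (1 - c k)]
  have hD2 : ∀ k, D k ^ 2 = (1 + c k) ^ 2 - 4 * t ^ 2 * c k :=
    fun k => Real.sq_sqrt (hdisc k).le
  have hDpos : ∀ k, 0 < D k := fun k => Real.sqrt_pos.2 (hdisc k)
  have hYk : ∀ k, 2 * t * Y k = 1 + c k - D k := by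
    intro k
    simp only [hYdef, hDdef, hcdef, hθdef]
    rw [hy (2 * k + 3)]
    field_simp
  -- limits
  have hN : Tendsto (fun k : ℕ => ((2 * k + 3 : ℕ) : ℝ)) atTop atTop := by
    apply tendsto_atTop_mono (fun k => ?_) tendsto_natCast_atTop_atTop
    push_cast; linarith
  have hθ0 : Tendsto θ atTop (nhds 0) := Tendsto.div_atTop tendsto_const_nhds hN
  have hc1 : Tendsto c atTop (nhds 1) := by
    have := (Real.continuous_cos.tendsto 0).comp hθ0
    simp only [Real.cos_zero] at this; exact this
  have hu0 : Tendsto u atTop (nhds 0) := by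
    have := (tendsto_const_nhds (x := (1:ℝ)) (f := atTop)).sub hc1
    simpa using this
  have hD2s : Tendsto D atTop (nhds (2 * s)) := by
    have h1 : Tendsto (fun k => (1 + c k) ^ 2 - 4 * t ^ 2 * c k) atTop
        (nhds ((1 + 1) ^ 2 - 4 * t ^ 2 * 1)) := by
      exact (((tendsto_const_nhds.add hc1).pow 2).sub ((tendsto_const_nhds.mul hc1)))
    have h2 := (Real.continuous_sqrt.tendsto _).comp h1
    have h3 : Real.sqrt ((1 + 1) ^ 2 - 4 * t ^ 2 * 1) = 2 * s := by
      rw [show ((1:ℝ) + 1) ^ 2 - 4 * t ^ 2 * 1 = (2 * s) ^ 2 by rw [mul_pow]; nlinarith [hs2]]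
      exact Real.sqrt_sq (by linarith)
    rw [h3] at h2
    exact h2
  have hYlim : Tendsto Y atTop (nhds ((1 - s) / t)) := by
    have h1 : Tendsto (fun k => (1 + c k - D k) / (2 * t)) atTop
        (nhds ((1 + 1 - 2 * s) / (2 * t))) :=
      ((tendsto_const_nhds.add hc1).sub hD2s).div_const _
    have h2 : ((1:ℝ) + 1 - 2 * s) / (2 * t) = (1 - s) / t := by
      rw [div_eq_div_iff (by positivity) (by positivity)]; ring
    rw [h2] at h1
    apply h1.congr
    intro k
    simp only [hYdef]
    rw [hy (2 * k + 3)]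
  have htYlim : Tendsto (fun k => t - Y k) atTop (nhds (s * (1 - s) / t)) := by
    have h1 := (tendsto_const_nhds (x := t) (f := atTop)).sub hYlim
    have h2 : t - (1 - s) / t = s * (1 - s) / t := by
      rw [eq_div_iff ht0.ne', sub_mul, div_mul_cancel₀ _ ht0.ne']
      nlinarith [hs2]
    rwa [h2] at h1
  have htYpos : ∀ᶠ k in atTop, 0 < t - Y k :=
    htYlim.eventually (eventually_gt_nhds (div_pos (mul_pos hs0 (by linarith)) ht0))

  -- key algebraic identity
  have key : ∀ k, 2 * t * (t - (1 + s) * Y k) * (D k + 2 * s) =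
      (1 + s) * (1 - c k) * (D k + 2 * s + (1 - c k) - 4 * s ^ 2) := by
    intro k
    linear_combination (-(1 + s) * (D k + 2 * s)) * hYk k + (1 + s) * hD2 k +
      (2 * (D k + 2 * s) - 4 * c k * (1 + s)) * hs2
  have hD2spos : ∀ k, 0 < D k + 2 * s := fun k => by linarith [hDpos k]
  have hr_eq : ∀ᶠ k in atTop, r k =
      (1 + s) * (D k + 2 * s + u k - 4 * s ^ 2) / (2 * t * (D k + 2 * s) * (t - Y k)) := by
    filter_upwards [htYpos] with k hk
    have hu := hupos k
    have hDp := hD2spos k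
    have h1 : 1 - a k = (t - (1 + s) * Y k) / (t - Y k) := by
      simp only [hadef]
      field_simp
      ring
    have h2 : t - (1 + s) * Y k =
        (1 + s) * (1 - c k) * (D k + 2 * s + (1 - c k) - 4 * s ^ 2) / (2 * t * (D k + 2 * s)) := by
      rw [eq_div_iff (by positivity)]
      linear_combination key k
    simp only [hrdef, hudef]
    rw [h1, h2]
    have hu' : (1:ℝ) - c k ≠ 0 := by simp only [hudef] at hu; linarith
    field_simp
  -- limit of r
  have hrlim : Tendsto r atTop (nhds ((1 + s) / (2 * s))) := by
    have hnum : Tendsto (fun k => (1 + s) * (D k + 2 * s + u k - 4 * s ^ 2)) atTop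
        (nhds ((1 + s) * (2 * s + 2 * s + 0 - 4 * s ^ 2))) :=
      tendsto_const_nhds.mul (((hD2s.add_const (2 * s)).add hu0).sub_const (4 * s ^ 2))
    have hden : Tendsto (fun k => 2 * t * (D k + 2 * s) * (t - Y k)) atTop
        (nhds (2 * t * (2 * s + 2 * s) * (s * (1 - s) / t))) :=
      (tendsto_const_nhds.mul (hD2s.add_const (2 * s))).mul htYlim
    have hden0 : 2 * t * (2 * s + 2 * s) * (s * (1 - s) / t) ≠ 0 := by
      have : (0:ℝ) < s * (1 - s) / t := div_pos (mul_pos hs0 (by linarith)) ht0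
      positivity
    have hval : (1 + s) * (2 * s + 2 * s + 0 - 4 * s ^ 2) /
        (2 * t * (2 * s + 2 * s) * (s * (1 - s) / t)) = (1 + s) / (2 * s) := by
      rw [div_eq_div_iff hden0 (by positivity)]
      field_simp
      ring
    have := hnum.div hden hden0
    rw [hval] at this
    exact this.congr' (EventuallyEq.symm hr_eq)
  have hrpos : ∀ᶠ k in atTop, 0 < r k :=
    hrlim.eventually (eventually_gt_nhds (by positivity))
  -- limit of a
  have haeq : ∀ k, a k = 1 - u k * r k := by
    intro k
    simp only [hrdef]
    rw [mul_div_cancel₀ _ (hupos k).ne']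
    ring
  have halim : Tendsto a atTop (nhds 1) := by
    have h1 : Tendsto (fun k => 1 - u k * r k) atTop (nhds (1 - 0 * ((1 + s) / (2 * s)))) :=
      tendsto_const_nhds.sub (hu0.mul hrlim)
    rw [show (1:ℝ) - 0 * ((1 + s) / (2 * s)) = 1 by ring] at h1
    exact h1.congr (fun k => (haeq k).symm)
  have hagt : ∀ᶠ k in atTop, -1 < a k :=
    halim.eventually (eventually_gt_nhds (by norm_num))
  have h1apos : ∀ᶠ k in atTop, 0 < 1 - a k := by
    filter_upwards [hrpos] with k hk
    rw [haeq k]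
    have := mul_pos (hupos k) hk
    linarith
  -- limit of p
  have hplim : Tendsto p atTop (nhds 0) := by
    have h1 : Tendsto (fun k => (1 - a k) / 2) atTop (nhds 0) := by
      have := (tendsto_const_nhds (x := (1:ℝ)) (f := atTop)).sub halim
      simpa using this.div_const 2
    have h2 := (Real.continuous_sqrt.tendsto 0).comp h1
    simp only [Real.sqrt_zero] at h2; exact h2
  have hppos : ∀ᶠ k in atTop, 0 < p k := by
    filter_upwards [h1apos] with k hk
    exact Real.sqrt_pos.2 (by linarith)
  have harc : Tendsto (fun k => Real.arcsin (p k) / p k) atTop (nhds 1) := by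
    apply arcsin_div_lim.comp
    rw [tendsto_nhdsWithin_iff]
    exact ⟨hplim, hppos.mono fun k hk => by simp [hk.ne']⟩
  -- limit of n * sin (θ/2)
  have hnsin : Tendsto (fun k => ((2 * k + 3 : ℕ) : ℝ) * Real.sin (θ k / 2)) atTop
      (nhds (π / 2)) := by
    have h1 : Tendsto (fun k => Real.sin (θ k / 2) / (θ k / 2)) atTop (nhds 1) := by
      apply sin_div_lim.comp
      rw [tendsto_nhdsWithin_iff]
      constructor
      · simpa using hθ0.div_const 2
      · exact Eventually.of_forall fun k => by
          simp [ne_of_gt (half_pos (hθpos k))]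
    have h2 := h1.const_mul (π / 2)
    rw [mul_one] at h2
    apply h2.congr
    intro k
    have hn0 : ((2 * k + 3 : ℕ) : ℝ) ≠ 0 := by positivity
    have hθk : θ k = π / ((2 * k + 3 : ℕ) : ℝ) := rfl
    rw [hθk]
    have hπ : π ≠ 0 := Real.pi_ne_zero
    field_simp
  -- limit of sqrt r
  have hsqr : Tendsto (fun k => Real.sqrt (r k)) atTop (nhds (Real.cosh (w / 2))) := by
    have h1 := (Real.continuous_sqrt.tendsto _).comp hrlim
    have h2 : Real.sqrt ((1 + s) / (2 * s)) = Real.cosh (w / 2) := by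
      rw [← hch2, Real.sqrt_sq (Real.cosh_pos (w / 2)).le]
    rw [h2] at h1
    exact h1

  -- final limit of the model function G
  have hG : Tendsto (fun k => 4 * (Real.arcsin (p k) / p k) *
      (((2 * k + 3 : ℕ) : ℝ) * Real.sin (θ k / 2)) * Real.sqrt (r k) - 2 * π) atTop
      (nhds (2 * π * (Real.cosh (w / 2) - 1))) := by
    have h1 : Tendsto (fun k => 4 * (Real.arcsin (p k) / p k) *
        (((2 * k + 3 : ℕ) : ℝ) * Real.sin (θ k / 2)) * Real.sqrt (r k) - 2 * π) atTop
        (nhds (4 * 1 * (π / 2) * Real.cosh (w / 2) - 2 * π)) :=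
      (((harc.const_mul 4).mul hnsin).mul hsqr).sub_const (2 * π)
    have h2 : 4 * 1 * (π / 2) * Real.cosh (w / 2) - 2 * π =
        2 * π * (Real.cosh (w / 2) - 1) := by ring
    rwa [h2] at h1
  -- eventual equality
  apply hG.congr'
  symm
  filter_upwards [htYpos, hagt, h1apos, hrpos, hppos] with k hk1 hk2 hk3 hk4 hk5
  -- denominator arccos equals θ k
  have q1 : 4 * t ^ 2 * (Y k * (1 - t * Y k) - c k * (t - Y k)) = 0 := by
    linear_combination (t * (D k - 2 * t * Y k + 1 + c k)) * hYk k + (-t) * hD2 k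
  have q2 : Y k * (1 - t * Y k) - c k * (t - Y k) = 0 := by
    have h4 : (4:ℝ) * t ^ 2 ≠ 0 := by positivity
    exact (mul_eq_zero.mp q1).resolve_left h4
  have hb : Y k * (1 - t * Y k) / (t - Y k) = c k := by
    rw [div_eq_iff hk1.ne']
    linarith
  have e2 : Real.arccos (y (2 * k + 3) * (1 - t * y (2 * k + 3)) / (t - y (2 * k + 3))) =
      θ k := by
    have : y (2 * k + 3) * (1 - t * y (2 * k + 3)) / (t - y (2 * k + 3)) =
        Y k * (1 - t * Y k) / (t - Y k) := rfl
    rw [this, hb]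
    exact Real.arccos_cos (hθpos k).le (hθltpi k).le
  have e1 : y (2 * k + 3) * s / (t - y (2 * k + 3)) = a k := rfl
  have harccos_a : Real.arccos (a k) = 2 * Real.arcsin (p k) :=
    arccos_eq_two_arcsin hk2.le (by linarith)
  have hpeq : p k = Real.sin (θ k / 2) * Real.sqrt (r k) := by
    have h1 : (1 - a k) / 2 = Real.sin (θ k / 2) ^ 2 * r k := by
      have h2 : 1 - a k = u k * r k := by rw [haeq k]; ring
      rw [h2, hsin2 k]; ring
    simp only [hpdef]
    rw [h1, Real.sqrt_mul (sq_nonneg _), Real.sqrt_sq (hsinpos k).le]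
  have hX : Real.sin (θ k / 2) ≠ 0 := (hsinpos k).ne'
  have hR : Real.sqrt (r k) ≠ 0 := (Real.sqrt_pos.2 hk4).ne'
  have hn0 : ((2 * k + 3 : ℕ) : ℝ) ≠ 0 := by positivity
  have hθk : θ k = π / ((2 * k + 3 : ℕ) : ℝ) := rfl
  rw [hA (2 * k + 3), e1, e2, harccos_a]
  have hπ : π ≠ 0 := Real.pi_ne_zero
  have hL : 2 * π * (2 * Real.arcsin (p k) / θ k) =
      4 * ((2 * k + 3 : ℕ) : ℝ) * Real.arcsin (p k) := by
    rw [hθk, div_div_eq_mul_div]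
    field_simp
    ring
  have hR2 : 4 * (Real.arcsin (p k) / p k) *
      (((2 * k + 3 : ℕ) : ℝ) * Real.sin (θ k / 2)) * Real.sqrt (r k) =
      4 * ((2 * k + 3 : ℕ) : ℝ) * Real.arcsin (p k) := by
    have h1 : (((2 * k + 3 : ℕ) : ℝ) * Real.sin (θ k / 2)) * Real.sqrt (r k) =
        ((2 * k + 3 : ℕ) : ℝ) * p k := by
      rw [hpeq]; ring
    rw [mul_assoc, h1]
    field_simp
  rw [hL, hR2]
end
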